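/- In a 2-connected graph, any two longest cycles intersect in at least two vertices. -/

import Mathlib

open SimpleGraph

/-- A cycle of maximum length among all cycles of `G`. -/
def IsLongestCycle {V : Type} (G : SimpleGraph V) {v : V} (c : G.Walk v v) : Prop :=
  c.IsCycle ∧ ∀ (w : V) (d : G.Walk w w), d.IsCycle → d.length ≤ c.length
/-- `G` is 2-connected. -/
def TwoConnected {V : Type} [Fintype V] (G : SimpleGraph V) : Prop :=
  3 ≤ Fintype.card V ∧ ∀ v : V, ((⊤ : G.Subgraph).deleteVerts {v}).coe.Connected

set_option linter.unusedSectionVars false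

namespace Aux
open SimpleGraph Walk

variable {V : Type} [DecidableEq V] {G : SimpleGraph V}


lemma firstHit {a b : V} (W : G.Walk a b) (S : Finset V) (h : ∃ z ∈ S, z ∈ W.support) :
    ∃ (s : V) (W₁ : G.Walk a s), s ∈ S ∧ (∀ z ∈ W₁.support, z ∈ S → z = s) ∧
      (∀ z ∈ W₁.support, z ∈ W.support) ∧ (∀ e ∈ W₁.edges, e ∈ W.edges) := by
  induction W with
  | nil =>
    obtain ⟨z, hzS, hz⟩ := h
    simp only [support_nil, List.mem_singleton] at hz
    subst hz
    exact ⟨z, Walk.nil, hzS, by simp, by simp, by simp⟩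
  | cons h' W' ih =>
    rename_i a c b
    by_cases haS : a ∈ S
    · exact ⟨a, Walk.nil, haS, by simp, by simp, by simp⟩
    · obtain ⟨z, hzS, hz⟩ := h
      have hz' : z ∈ W'.support := by
        rcases (by simpa using hz) with h | h
        · exact absurd (h ▸ hzS) haS
        · exact h
      obtain ⟨s, W₁, hsS, honly, hsub, hesub⟩ := ih ⟨z, hzS, hz'⟩
      refine ⟨s, Walk.cons h' W₁, hsS, ?_, ?_, ?_⟩
      · intro z hzsup hzS'
        rcases (by simpa using hzsup) with rfl | h
        · exact absurd hzS' haS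
        · exact honly z h hzS'
      · intro z hzsup
        rcases (by simpa using hzsup) with rfl | h
        · simp
        · simp [hsub z h]
      · intro e hesup
        rcases (by simpa using hesup) with rfl | h
        · simp
        · simp [hesub e h]

lemma lastHit {a b : V} (W : G.Walk a b) (S : Finset V) (h : ∃ z ∈ S, z ∈ W.support) :
    ∃ (s : V) (W₁ : G.Walk s b), s ∈ S ∧ (∀ z ∈ W₁.support, z ∈ S → z = s) ∧
      (∀ z ∈ W₁.support, z ∈ W.support) ∧ (∀ e ∈ W₁.edges, e ∈ W.edges) := by
  obtain ⟨s, W₁, hsS, honly, hsub, hesub⟩ := firstHit W.reverse S (by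
    obtain ⟨z, hzS, hz⟩ := h
    exact ⟨z, hzS, by simpa using hz⟩)
  refine ⟨s, W₁.reverse, hsS, ?_, ?_, ?_⟩
  · intro z hz; exact honly z (by simpa using hz)
  · intro z hz
    have := hsub z (by simpa using hz)
    simpa using this
  · intro e he
    have := hesub e (by simpa using he)
    simpa using this

/-- Extract from a walk from `A` to `B` a path meeting `A` only at its start and
`B` only at its end. -/
lemma extractPath {a b : V} (W : G.Walk a b) (A B : Finset V) (ha : a ∈ A) (hb : b ∈ B) :
    ∃ (s t : V) (Q : G.Walk s t), Q.IsPath ∧ s ∈ A ∧ t ∈ B ∧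
      (∀ z ∈ Q.support, z ∈ A → z = s) ∧ (∀ z ∈ Q.support, z ∈ B → z = t) ∧
      (∀ z ∈ Q.support, z ∈ W.support) := by
  obtain ⟨t, W₁, htB, hBonly, hsub₁, -⟩ := firstHit W B ⟨b, hb, W.end_mem_support⟩
  obtain ⟨s, W₂, hsA, hAonly, hsub₂, -⟩ := lastHit W₁ A ⟨a, ha, W₁.start_mem_support⟩
  refine ⟨s, t, W₂.bypass, W₂.bypass_isPath, hsA, htB, ?_, ?_, ?_⟩
  · intro z hz hzA
    exact hAonly z (W₂.support_bypass_subset hz) hzA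
  · intro z hz hzB
    exact hBonly z (hsub₂ z (W₂.support_bypass_subset hz)) hzB
  · intro z hz
    exact hsub₁ z (hsub₂ z (W₂.support_bypass_subset hz))


/-- `S` separates `A` from `B` in `G`: every `A`–`B` walk meets `S`. -/
def Sep (G : SimpleGraph V) (A B S : Finset V) : Prop :=
  ∀ ⦃a b : V⦄, a ∈ A → b ∈ B → ∀ W : G.Walk a b, ∃ z ∈ S, z ∈ W.support

/-- Contraction of the edge `xy` into `x`, leaving `y` isolated. -/
def contract (G : SimpleGraph V) (x y : V) : SimpleGraph V where
  Adj u v := u ≠ v ∧ u ≠ y ∧ v ≠ y ∧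
    (G.Adj u v ∨ (u = x ∧ G.Adj y v) ∨ (v = x ∧ G.Adj u y))
  symm := by
    constructor
    rintro u v ⟨h1, h2, h3, h4⟩
    refine ⟨h1.symm, h3, h2, ?_⟩
    rcases h4 with h | ⟨rfl, h⟩ | ⟨rfl, h⟩
    · exact Or.inl h.symm
    · exact Or.inr (Or.inr ⟨rfl, h.symm⟩)
    · exact Or.inr (Or.inl ⟨rfl, h.symm⟩)
  loopless := ⟨fun u h => h.1 rfl⟩

open Classical in
/-- number of (ordered) edges. -/
noncomputable def m [Fintype V] (G : SimpleGraph V) : ℕ :=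
  (Finset.univ.filter fun p : V × V => G.Adj p.1 p.2).card

lemma m_deleteEdges_lt [Fintype V] {G : SimpleGraph V} {x y : V} (hxy : G.Adj x y) :
    m (G.deleteEdges {s(x, y)}) < m G := by
  classical
  apply Finset.card_lt_card
  rw [Finset.ssubset_iff_of_subset]
  · refine ⟨(x, y), ?_, ?_⟩
    · simp [hxy]
    · simp [deleteEdges_adj]
  · intro p hp
    simp only [Finset.mem_filter, Finset.mem_univ, true_and, deleteEdges_adj] at hp ⊢
    exact hp.1

lemma m_contract_lt [Fintype V] {G : SimpleGraph V} {x y : V} (hxy : G.Adj x y) :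
    m (contract G x y) < m G := by
  classical
  have hne : x ≠ y := G.ne_of_adj hxy
  have hle : m (contract G x y) ≤
      ((Finset.univ.filter fun p : V × V => G.Adj p.1 p.2).erase (x, y)).card := by
    apply Finset.card_le_card_of_injOn
      (fun p => if G.Adj p.1 p.2 then p else if p.1 = x then (y, p.2) else (p.1, y))
    · rintro ⟨p1, p2⟩ hp
      simp only [Finset.mem_coe, Finset.mem_filter, Finset.mem_univ, true_and] at hp
      obtain ⟨h1, h2, h3, h4⟩ := hp
      simp only [Finset.mem_coe, Finset.mem_erase, Finset.mem_filter, Finset.mem_univ, true_and]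
      by_cases hA : G.Adj p1 p2
      · rw [if_pos hA]
        exact ⟨fun h => h3 (congrArg Prod.snd h), hA⟩
      · rw [if_neg hA]
        rcases h4 with h | ⟨hpx, h⟩ | ⟨hpx, h⟩
        · exact absurd h hA
        · rw [if_pos hpx]
          exact ⟨fun h' => hne ((congrArg Prod.fst h').symm), h⟩
        · have hpx1 : p1 ≠ x := fun hh => h1 (hh.trans hpx.symm)
          rw [if_neg hpx1]
          refine ⟨fun h' => hpx1 (congrArg Prod.fst h'), ?_⟩
          subst hpx; exact h
    · rintro ⟨p1, p2⟩ hp ⟨q1, q2⟩ hq hpq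
      simp only [Finset.coe_filter, Set.mem_setOf_eq, Finset.mem_univ, true_and] at hp hq
      obtain ⟨hp1, hp2, hp3, hp4⟩ := hp
      obtain ⟨hq1, hq2, hq3, hq4⟩ := hq
      dsimp only at hpq
      by_cases hA : G.Adj p1 p2 <;> by_cases hB : G.Adj q1 q2
      · rwa [if_pos hA, if_pos hB] at hpq
      · rw [if_pos hA, if_neg hB] at hpq
        by_cases hqx : q1 = x
        · rw [if_pos hqx] at hpq
          exact absurd (congrArg Prod.fst hpq) hp2
        · rw [if_neg hqx] at hpq
          exact absurd (congrArg Prod.snd hpq) hp3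
      · rw [if_neg hA, if_pos hB] at hpq
        by_cases hpx : p1 = x
        · rw [if_pos hpx] at hpq
          exact absurd (congrArg Prod.fst hpq).symm hq2
        · rw [if_neg hpx] at hpq
          exact absurd (congrArg Prod.snd hpq).symm hq3
      · rw [if_neg hA, if_neg hB] at hpq
        by_cases hpx : p1 = x <;> by_cases hqx : q1 = x
        · rw [if_pos hpx, if_pos hqx] at hpq
          have := congrArg Prod.snd hpq
          simp only at this
          rw [Prod.ext_iff]
          exact ⟨hpx.trans hqx.symm, this⟩
        · rw [if_pos hpx, if_neg hqx] at hpq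
          exact absurd (congrArg Prod.snd hpq) hp3
        · rw [if_neg hpx, if_pos hqx] at hpq
          exact absurd (congrArg Prod.snd hpq).symm hq3
        · rw [if_neg hpx, if_neg hqx] at hpq
          have h1' := congrArg Prod.fst hpq
          simp only at h1'
          have hp2x : p2 = x := by
            rcases hp4 with h | ⟨h, -⟩ | ⟨h, -⟩
            · exact absurd h hA
            · exact absurd h hpx
            · exact h
          have hq2x : q2 = x := by
            rcases hq4 with h | ⟨h, -⟩ | ⟨h, -⟩
            · exact absurd h hB
            · exact absurd h hqx
            · exact h
          rw [Prod.ext_iff]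
          exact ⟨h1', hp2x.trans hq2x.symm⟩
  have : ((Finset.univ.filter fun p : V × V => G.Adj p.1 p.2).erase (x, y)).card <
      (Finset.univ.filter fun p : V × V => G.Adj p.1 p.2).card := by
    apply Finset.card_erase_lt_of_mem
    simp [hxy]
  exact lt_of_le_of_lt hle this

/-- vertex contraction map -/
def cf (x y : V) : V → V := fun u => if u = y then x else u

lemma cf_ne_y {x y : V} (hxy : x ≠ y) (u : V) : cf x y u ≠ y := by
  unfold cf; split <;> [exact hxy; assumption]

lemma cf_eq_self_or {x y : V} (u : V) : cf x y u = u ∨ (u = y ∧ cf x y u = x) := by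
  unfold cf; split <;> simp_all

lemma pushforward {G : SimpleGraph V} {x y : V} (hxy : x ≠ y) {a b : V} (W : G.Walk a b) :
    ∃ W' : (contract G x y).Walk (cf x y a) (cf x y b),
      ∀ z ∈ W'.support, ∃ u ∈ W.support, cf x y u = z := by
  induction W with
  | nil => exact ⟨Walk.nil, by simp⟩
  | cons h' W' ih =>
    rename_i a c b
    obtain ⟨W'', hW''⟩ := ih
    by_cases hac : cf x y a = cf x y c
    · refine ⟨W''.copy hac.symm rfl, ?_⟩
      intro z hz
      rw [Walk.support_copy] at hz
      obtain ⟨u, hu, hcu⟩ := hW'' z hz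
      exact ⟨u, by simp [hu], hcu⟩
    · have hadj : (contract G x y).Adj (cf x y a) (cf x y c) := by
        refine ⟨hac, cf_ne_y hxy a, cf_ne_y hxy c, ?_⟩
        by_cases hay : a = y <;> by_cases hcy : c = y
        · rw [hay, hcy] at h'; exact absurd h' (G.loopless.irrefl y)
        · refine Or.inr (Or.inl ⟨by simp [cf, hay], ?_⟩)
          have : cf x y c = c := by simp [cf, hcy]
          rw [this]
          exact hay ▸ h'
        · refine Or.inr (Or.inr ⟨by simp [cf, hcy], ?_⟩)
          have : cf x y a = a := by simp [cf, hay]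
          rw [this]
          exact hcy ▸ h'
        · have h1 : cf x y a = a := by simp [cf, hay]
          have h2 : cf x y c = c := by simp [cf, hcy]
          rw [h1, h2]
          exact Or.inl h'
      refine ⟨Walk.cons hadj W'', ?_⟩
      intro z hz
      rcases (by simpa using hz) with rfl | hz'
      · exact ⟨a, by simp, rfl⟩
      · obtain ⟨u, hu, hcu⟩ := hW'' z hz'
        exact ⟨u, by simp [hu], hcu⟩

lemma liftWalk {G : SimpleGraph V} {x y : V} (hxy : G.Adj x y) {a b : V}
    (W' : (contract G x y).Walk a b) :
    ∃ W : G.Walk a b, ∀ z ∈ W.support, z ∈ W'.support ∨ (z = y ∧ x ∈ W'.support) := by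
  induction W' with
  | nil => exact ⟨Walk.nil, by simp⟩
  | cons h' W'' ih =>
    rename_i a c b
    obtain ⟨W, hW⟩ := ih
    have hsub : ∀ z ∈ W.support, z ∈ (Walk.cons h' W'').support ∨
        (z = y ∧ x ∈ (Walk.cons h' W'').support) := by
      intro z hz
      rcases hW z hz with h | ⟨rfl, h⟩
      · exact Or.inl (by simp [h])
      · exact Or.inr ⟨rfl, by simp [h]⟩
    obtain ⟨h1, h2, h3, h4⟩ := h'
    rcases h4 with h | ⟨ha, h⟩ | ⟨hc, h⟩
    · refine ⟨Walk.cons h W, ?_⟩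
      intro z hz
      rcases (by simpa using hz) with rfl | hz'
      · exact Or.inl (by simp)
      · exact hsub z hz'
    · subst ha
      refine ⟨Walk.cons hxy (Walk.cons h W), ?_⟩
      intro z hz
      rcases (by simpa using hz) with rfl | rfl | hz'
      · exact Or.inl (by simp)
      · exact Or.inr ⟨rfl, by simp⟩
      · exact hsub z hz'
    · subst hc
      refine ⟨Walk.cons h (Walk.cons hxy.symm W), ?_⟩
      intro z hz
      rcases (by simpa using hz) with rfl | rfl | hz'
      · exact Or.inl (by simp)
      · exact Or.inr ⟨rfl, List.mem_cons_of_mem _ W''.start_mem_support⟩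
      · exact hsub z hz'

lemma ne_y_of_support {G : SimpleGraph V} {x y : V} {a b : V}
    (W : (contract G x y).Walk a b) (ha : a ≠ y) : ∀ z ∈ W.support, z ≠ y := by
  induction W with
  | nil => intro z hz; simp at hz; subst hz; exact ha
  | cons h' W'' ih =>
    intro z hz
    rcases (by simpa using hz) with rfl | hz'
    · exact ha
    · exact ih h'.2.2.1 z hz'

lemma walkMapLe {G G' : SimpleGraph V} (h : G ≤ G') {a b : V} (W : G.Walk a b) :
    ∃ W' : G'.Walk a b, W'.support = W.support :=
  ⟨W.map (Hom.ofLE h), by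
    rw [Walk.support_map]
    have : ⇑(Hom.ofLE h) = id := rfl
    rw [this, List.map_id]⟩

lemma walkToDeleteEdges {G : SimpleGraph V} {x y : V} {a b : V} (W : G.Walk a b)
    (he : s(x, y) ∉ W.edges) :
    ∃ W' : (G.deleteEdges {s(x, y)}).Walk a b, W'.support = W.support := by
  refine ⟨W.transfer _ ?_, Walk.support_transfer _ _⟩
  intro e heW
  rw [edgeSet_deleteEdges]
  exact ⟨W.edges_subset_edgeSet heW, by rintro rfl; exact he heW⟩


lemma end_not_mem_takeUntil {a c : V} (P : G.Walk a c) (hP : P.IsPath) {z : V}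
    (hz : z ∈ P.support) (hne : z ≠ c) : c ∉ (P.takeUntil z hz).support := by
  intro hc
  have hspec := P.take_spec hz
  have hsupp : P.support = (P.takeUntil z hz).support ++ (P.dropUntil z hz).support.tail := by
    rw [← Walk.support_append, hspec]
  have hnd : P.support.Nodup := hP.support_nodup
  rw [hsupp] at hnd
  have hcd : c ∈ (P.dropUntil z hz).support := Walk.end_mem_support _
  have : c ∉ (P.dropUntil z hz).support.tail := by
    intro hct
    exact (List.disjoint_of_nodup_append hnd) hc hct
  have hcons : (P.dropUntil z hz).support = z :: (P.dropUntil z hz).support.tail :=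
    (Walk.support_eq_cons _)
  rw [hcons] at hcd
  rcases List.mem_cons.mp hcd with h | h
  · exact hne h.symm
  · exact this h

lemma start_not_mem_dropUntil {a c : V} (P : G.Walk a c) (hP : P.IsPath) {z : V}
    (hz : z ∈ P.support) (hne : z ≠ a) : a ∉ (P.dropUntil z hz).support := by
  intro hc
  have hspec := P.take_spec hz
  have hsupp : P.support = (P.takeUntil z hz).support ++ (P.dropUntil z hz).support.tail := by
    rw [← Walk.support_append, hspec]
  have hnd : P.support.Nodup := hP.support_nodup
  rw [hsupp] at hnd
  have hat : a ∈ (P.takeUntil z hz).support := Walk.start_mem_support _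
  have hcons : (P.dropUntil z hz).support = z :: (P.dropUntil z hz).support.tail :=
    (Walk.support_eq_cons _)
  rw [hcons] at hc
  rcases List.mem_cons.mp hc with h | h
  · exact hne h.symm
  · exact (List.disjoint_of_nodup_append hnd) hat h

/-- key crossing lemma: a path from `A` to `x` meeting `{x,y}` only at its end and a
path from `y` to `B` meeting `{x,y}` only at its start are disjoint (in a subgraph `G'`),
provided `{x,y}` separates `A` from `B` in `G`. -/
lemma cross {G' : SimpleGraph V} (hle : G' ≤ G) {A B S₂ : Finset V} {x y : V}
    (hx : x ∈ S₂) (hy : y ∈ S₂) (hxy : x ≠ y) (hsepS : Sep G A B S₂)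
    {sP vQ : V} (P : G'.Walk sP x) (Q : G'.Walk y vQ)
    (hP : P.IsPath) (hQ : Q.IsPath) (hsP : sP ∈ A) (hvQ : vQ ∈ B)
    (hPS : ∀ z ∈ P.support, z ∈ S₂ → z = x)
    (hQS : ∀ z ∈ Q.support, z ∈ S₂ → z = y) :
    ∀ z ∈ P.support, z ∉ Q.support := by
  intro z hzP hzQ
  by_cases hzS : z ∈ S₂
  · exact hxy ((hPS z hzP hzS).symm.trans (hQS z hzQ hzS))
  · have hW : ∃ W : G'.Walk sP vQ, ∀ w ∈ W.support,
        w ∈ (P.takeUntil z hzP).support ∨ w ∈ (Q.dropUntil z hzQ).support := by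
      refine ⟨(P.takeUntil z hzP).append (Q.dropUntil z hzQ), ?_⟩
      intro w hw
      rw [Walk.mem_support_append_iff] at hw
      exact hw
    obtain ⟨W, hWsupp⟩ := hW
    obtain ⟨WG, hWGsupp⟩ := walkMapLe hle W
    obtain ⟨w, hwS, hwsupp⟩ := hsepS hsP hvQ WG
    rw [hWGsupp] at hwsupp
    rcases hWsupp w hwsupp with h | h
    · have hwx : w = x := hPS w (P.support_takeUntil_subset hzP h) hwS
      subst hwx
      exact end_not_mem_takeUntil P hP hzP (fun hh => hzS (hh ▸ hx)) h
    · have hwy : w = y := hQS w (Q.support_dropUntil_subset hzQ h) hwS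
      subst hwy
      exact start_not_mem_dropUntil Q hQ hzQ (fun hh => hzS (hh ▸ hy)) h

/-- glue two pairs of paths through the 2-separator `{x, y}`. -/
lemma glue2 {G' : SimpleGraph V} (hle : G' ≤ G) {A B : Finset V} {x y : V} (hxy : x ≠ y)
    (hsepS : Sep G A B {x, y})
    {sP sP' vQ vQ' : V}
    (P : G'.Walk sP x) (P' : G'.Walk sP' y) (Q : G'.Walk x vQ) (Q' : G'.Walk y vQ')
    (hP : P.IsPath) (hP' : P'.IsPath) (hQ : Q.IsPath) (hQ' : Q'.IsPath)
    (hsP : sP ∈ A) (hsP' : sP' ∈ A) (hvQ : vQ ∈ B) (hvQ' : vQ' ∈ B)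
    (hPS : ∀ z ∈ P.support, z ∈ ({x, y} : Finset V) → z = x)
    (hP'S : ∀ z ∈ P'.support, z ∈ ({x, y} : Finset V) → z = y)
    (hQS : ∀ z ∈ Q.support, z ∈ ({x, y} : Finset V) → z = x)
    (hQ'S : ∀ z ∈ Q'.support, z ∈ ({x, y} : Finset V) → z = y)
    (hPP' : ∀ z ∈ P.support, z ∉ P'.support) (hQQ' : ∀ z ∈ Q.support, z ∉ Q'.support) :
    ∃ (a b a' b' : V) (W : G.Walk a b) (W' : G.Walk a' b'),
      a ∈ A ∧ b ∈ B ∧ a' ∈ A ∧ b' ∈ B ∧ ∀ z ∈ W.support, z ∉ W'.support := by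
  have hx : x ∈ ({x, y} : Finset V) := by simp
  have hy : y ∈ ({x, y} : Finset V) := by simp
  have hPQ' : ∀ z ∈ P.support, z ∉ Q'.support :=
    cross hle hx hy hxy hsepS P Q' hP hQ' hsP hvQ' hPS hQ'S
  have hP'Q : ∀ z ∈ P'.support, z ∉ Q.support := by
    intro z hz hzQ
    exact cross hle hy hx hxy.symm hsepS P' Q hP' hQ hsP' hvQ hP'S hQS z hz hzQ
  obtain ⟨R₁, hR₁⟩ := walkMapLe hle (P.append Q)
  obtain ⟨R₂, hR₂⟩ := walkMapLe hle (P'.append Q')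
  refine ⟨sP, vQ, sP', vQ', R₁, R₂, hsP, hvQ, hsP', hvQ', ?_⟩
  intro z hz1 hz2
  rw [hR₁, Walk.mem_support_append_iff] at hz1
  rw [hR₂, Walk.mem_support_append_iff] at hz2
  rcases hz1 with h1 | h1 <;> rcases hz2 with h2 | h2
  · exact hPP' z h1 h2
  · exact hPQ' z h1 h2
  · exact hP'Q z h2 h1
  · exact hQQ' z h1 h2

lemma liftPair {G : SimpleGraph V} {x y : V} (hxy : G.Adj x y) {A B : Finset V}
    {a b a' b' : V} (W1' : (contract G x y).Walk a b) (W2' : (contract G x y).Walk a' b')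
    (ha : a ∈ A.image (cf x y)) (hb : b ∈ B.image (cf x y))
    (ha' : a' ∈ A.image (cf x y)) (hb' : b' ∈ B.image (cf x y))
    (hdisj : ∀ z ∈ W1'.support, z ∉ W2'.support)
    (hx2 : x ∉ W2'.support) :
    ∃ (a b a' b' : V) (W : G.Walk a b) (W' : G.Walk a' b'),
      a ∈ A ∧ b ∈ B ∧ a' ∈ A ∧ b' ∈ B ∧ ∀ z ∈ W.support, z ∉ W'.support := by
  have hne : x ≠ y := G.ne_of_adj hxy
  have haY : a' ≠ y := by
    obtain ⟨u, -, rfl⟩ := Finset.mem_image.mp ha'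
    exact cf_ne_y hne u
  have hW2'y : ∀ z ∈ W2'.support, z ≠ y := ne_y_of_support W2' haY
  -- lift the walk avoiding x
  obtain ⟨W2, hW2⟩ := liftWalk hxy W2'
  have hW2sub : ∀ z ∈ W2.support, z ∈ W2'.support := by
    intro z hz
    rcases hW2 z hz with h | ⟨-, h⟩
    · exact h
    · exact absurd h hx2
  have ha'A : a' ∈ A := by
    obtain ⟨u, hu, hcu⟩ := Finset.mem_image.mp ha'
    rcases cf_eq_self_or (x := x) (y := y) u with h | ⟨huy, h⟩
    · rwa [← hcu, h]
    · have hax : a' = x := hcu.symm.trans h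
      exact absurd (hax ▸ W2'.start_mem_support) hx2
  have hb'B : b' ∈ B := by
    obtain ⟨u, hu, hcu⟩ := Finset.mem_image.mp hb'
    rcases cf_eq_self_or (x := x) (y := y) u with h | ⟨huy, h⟩
    · rwa [← hcu, h]
    · have hax : b' = x := hcu.symm.trans h
      exact absurd (hax ▸ W2'.end_mem_support) hx2
  -- lift the other walk and adjust its endpoints
  obtain ⟨W1, hW1⟩ := liftWalk hxy W1'
  have hW1prop : ∀ z ∈ W1.support, z ∈ W1'.support ∨ z = y := by
    intro z hz
    rcases hW1 z hz with h | ⟨h, -⟩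
    · exact Or.inl h
    · exact Or.inr h
  have step1 : ∃ (a₁ : V) (W : G.Walk a₁ b), a₁ ∈ A ∧
      (∀ z ∈ W.support, z ∈ W1'.support ∨ z = y) := by
    obtain ⟨u, hu, hcu⟩ := Finset.mem_image.mp ha
    rcases cf_eq_self_or (x := x) (y := y) u with h | ⟨huy, h⟩
    · exact ⟨a, W1, by rwa [← hcu, h], hW1prop⟩
    · have hax : a = x := hcu.symm.trans h
      refine ⟨y, Walk.cons hxy.symm (W1.copy hax rfl), huy ▸ hu, ?_⟩
      intro z hz
      rcases List.mem_cons.mp (by simpa using hz) with rfl | hz'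
      · exact Or.inr rfl
      · exact hW1prop z (by simpa using hz')
  obtain ⟨a₁, Wm, ha₁A, hWmprop⟩ := step1
  have step2 : ∃ (b₁ : V) (W : G.Walk a₁ b₁), b₁ ∈ B ∧
      (∀ z ∈ W.support, z ∈ W1'.support ∨ z = y) := by
    obtain ⟨u, hu, hcu⟩ := Finset.mem_image.mp hb
    rcases cf_eq_self_or (x := x) (y := y) u with h | ⟨huy, h⟩
    · exact ⟨b, Wm, by rwa [← hcu, h], hWmprop⟩
    · have hbx : b = x := hcu.symm.trans h
      have hWm' : ∀ z ∈ (Wm.copy rfl hbx).support, z ∈ W1'.support ∨ z = y := by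
        intro z hz
        rw [Walk.support_copy] at hz
        exact hWmprop z hz
      refine ⟨y, (Wm.copy rfl hbx).append (Walk.cons hxy Walk.nil), huy ▸ hu, ?_⟩
      intro z hz
      rw [Walk.mem_support_append_iff] at hz
      rcases hz with hz' | hz'
      · exact hWm' z hz'
      · rcases (by simpa using hz' : z = x ∨ z = y) with rfl | rfl
        · exact hWm' z (Walk.end_mem_support _)
        · exact Or.inr rfl
  obtain ⟨b₁, Wf, hb₁B, hWfprop⟩ := step2
  refine ⟨a₁, b₁, a', b', Wf, W2, ha₁A, hb₁B, ha'A, hb'B, ?_⟩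
  intro z hz1 hz2
  have hz2' := hW2sub z hz2
  rcases hWfprop z hz1 with h | rfl
  · exact hdisj z h hz2'
  · exact hW2'y z hz2' rfl

lemma noEdge_case (G : SimpleGraph V) (hE : ∀ u v : V, ¬ G.Adj u v) (A B : Finset V)
    (hsep : ∀ S : Finset V, Sep G A B S → 2 ≤ S.card) :
    ∃ (a b a' b' : V) (W : G.Walk a b) (W' : G.Walk a' b'),
      a ∈ A ∧ b ∈ B ∧ a' ∈ A ∧ b' ∈ B ∧ ∀ z ∈ W.support, z ∉ W'.support := by
  have hAB : Sep G A B (A ∩ B) := by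
    intro a b ha hb W
    cases W with
    | nil => exact ⟨a, Finset.mem_inter.mpr ⟨ha, hb⟩, by simp⟩
    | cons h _ => exact absurd h (hE _ _)
  have h2 := hsep _ hAB
  obtain ⟨a, ha, b, hb, hab⟩ := Finset.one_lt_card.mp h2
  refine ⟨a, a, b, b, Walk.nil, Walk.nil, (Finset.mem_inter.mp ha).1,
    (Finset.mem_inter.mp ha).2, (Finset.mem_inter.mp hb).1, (Finset.mem_inter.mp hb).2, ?_⟩
  intro z hz1 hz2
  simp at hz1 hz2
  exact hab (hz1 ▸ hz2 ▸ rfl)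

theorem menger2 [Fintype V] : ∀ (n : ℕ) (G : SimpleGraph V), m G ≤ n → ∀ A B : Finset V,
    (∀ S : Finset V, Sep G A B S → 2 ≤ S.card) →
    ∃ (a b a' b' : V) (W : G.Walk a b) (W' : G.Walk a' b'),
      a ∈ A ∧ b ∈ B ∧ a' ∈ A ∧ b' ∈ B ∧ ∀ z ∈ W.support, z ∉ W'.support := by
  intro n
  induction n with
  | zero =>
    intro G hm A B hsep
    refine noEdge_case G ?_ A B hsep
    intro u v huv
    exfalso
    have h0 : m G = 0 := Nat.le_zero.mp hm
    unfold m at h0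
    rw [Finset.card_eq_zero] at h0
    have : (u, v) ∈ (∅ : Finset (V × V)) := by
      rw [← h0]
      simp [huv]
    simp at this
  | succ n ih =>
    intro G hm A B hsep
    by_cases hE : ∃ p : V × V, G.Adj p.1 p.2
    swap
    · push_neg at hE
      exact noEdge_case G (fun u v => hE (u, v)) A B hsep
    obtain ⟨⟨x, y⟩, hxy⟩ := hE
    have hne : x ≠ y := G.ne_of_adj hxy
    set H := contract G x y with hH
    set f := cf x y with hf
    by_cases hp : ∀ S : Finset V, Sep H (A.image f) (B.image f) S → 2 ≤ S.card
    · -- recurse on the contraction and lift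
      have hmH : m H ≤ n := Nat.lt_succ_iff.mp (lt_of_lt_of_le (m_contract_lt hxy) hm)
      obtain ⟨a, b, a', b', W1', W2', ha, hb, ha', hb', hdisj⟩ :=
        ih H hmH (A.image f) (B.image f) hp
      by_cases hx2 : x ∈ W2'.support
      · have hx1 : x ∉ W1'.support := fun h => hdisj x h hx2
        exact liftPair hxy W2' W1' ha' hb' ha hb (fun z hz hz1 => hdisj z hz1 hz) hx1
      · exact liftPair hxy W1' W2' ha hb ha' hb' hdisj hx2
    · -- a separator of size ≤ 1 in the contraction: it must be {x}
      push_neg at hp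
      obtain ⟨Y, hYsep, hYcard⟩ := hp
      have hsepYy : Sep G A B (Y ∪ {y}) := by
        intro a b ha hb W
        obtain ⟨W', hW'⟩ := pushforward (G := G) hne W
        obtain ⟨z, hzY, hzsupp⟩ := hYsep (Finset.mem_image_of_mem f ha)
          (Finset.mem_image_of_mem f hb) W'
        obtain ⟨u, hu, hcfu⟩ := hW' z hzsupp
        rcases cf_eq_self_or (x := x) (y := y) u with hcase | ⟨huy, -⟩
        · exact ⟨u, Finset.mem_union_left _ (by rw [hcase.symm.trans hcfu]; exact hzY), hu⟩
        · exact ⟨y, Finset.mem_union_right _ (by simp), huy ▸ hu⟩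
      have h2 := hsep _ hsepYy
      have hle2 : (Y ∪ {y}).card ≤ Y.card + 1 :=
        (Finset.card_union_le _ _).trans (by simp)
      have hY1 : Y.card = 1 := by omega
      obtain ⟨w, rfl⟩ := Finset.card_eq_one.mp hY1
      have hwx : w = x := by
        by_contra hwx
        have hsepY : Sep G A B {w} := by
          intro a b ha hb W
          obtain ⟨W', hW'⟩ := pushforward (G := G) hne W
          obtain ⟨z, hzY, hzsupp⟩ := hYsep (Finset.mem_image_of_mem f ha)
            (Finset.mem_image_of_mem f hb) W'
          obtain ⟨u, hu, hcfu⟩ := hW' z hzsupp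
          have hzw : z = w := Finset.mem_singleton.mp hzY
          rcases cf_eq_self_or (x := x) (y := y) u with hcase | ⟨huy, hcfx⟩
          · exact ⟨u, by rw [hcase.symm.trans hcfu]; exact hzY, hu⟩
          · exact absurd (hcfx.symm.trans (hcfu.trans hzw)).symm hwx
        have := hsep _ hsepY
        simp at this
      have hYx : Sep H (A.image f) (B.image f) {x} := hwx ▸ hYsep
      have hsepS : Sep G A B ({x, y} : Finset V) := by
        intro a b ha hb W
        obtain ⟨W', hW'⟩ := pushforward (G := G) hne W
        obtain ⟨z, hzY, hzsupp⟩ := hYx (Finset.mem_image_of_mem f ha)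
          (Finset.mem_image_of_mem f hb) W'
        obtain ⟨u, hu, hcfu⟩ := hW' z hzsupp
        have hzw : z = x := Finset.mem_singleton.mp hzY
        rcases cf_eq_self_or (x := x) (y := y) u with hcase | ⟨huy, -⟩
        · exact ⟨u, by rw [hcase.symm.trans (hcfu.trans hzw)]; simp, hu⟩
        · exact ⟨y, by simp, huy ▸ hu⟩
      set G' := G.deleteEdges {s(x, y)} with hG'
      have hle' : G' ≤ G := G.deleteEdges_le _
      have hm' : m G' ≤ n := Nat.lt_succ_iff.mp (lt_of_lt_of_le (m_deleteEdges_lt hxy) hm)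
      have hside1 : ∀ T : Finset V, Sep G' A {x, y} T → 2 ≤ T.card := by
        intro T hT
        apply hsep
        intro a b ha hb W
        obtain ⟨s, W₁, hsS, honly, hsub, hesub⟩ := firstHit W {x, y} (hsepS ha hb W)
        have heW : s(x, y) ∉ W₁.edges := by
          intro he
          have hx₁ := honly x (W₁.fst_mem_support_of_mem_edges he) (by simp)
          have hy₁ := honly y (W₁.snd_mem_support_of_mem_edges he) (by simp)
          exact hne (hx₁.trans hy₁.symm)
        obtain ⟨W₁', hW₁'supp⟩ := walkToDeleteEdges W₁ heW
        obtain ⟨z, hzT, hzsupp⟩ := hT ha hsS W₁'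
        refine ⟨z, hzT, hsub z ?_⟩
        rwa [hW₁'supp] at hzsupp
      have hside2 : ∀ T : Finset V, Sep G' {x, y} B T → 2 ≤ T.card := by
        intro T hT
        apply hsep
        intro a b ha hb W
        obtain ⟨s, W₁, hsS, honly, hsub, hesub⟩ := lastHit W {x, y} (hsepS ha hb W)
        have heW : s(x, y) ∉ W₁.edges := by
          intro he
          have hx₁ := honly x (W₁.fst_mem_support_of_mem_edges he) (by simp)
          have hy₁ := honly y (W₁.snd_mem_support_of_mem_edges he) (by simp)
          exact hne (hx₁.trans hy₁.symm)
        obtain ⟨W₁', hW₁'supp⟩ := walkToDeleteEdges W₁ heW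
        obtain ⟨z, hzT, hzsupp⟩ := hT hsS hb W₁'
        refine ⟨z, hzT, hsub z ?_⟩
        rwa [hW₁'supp] at hzsupp
      obtain ⟨a₁, c₁, a₂, c₂, U₁, U₂, hA1, hC1, hA2, hC2, hU⟩ := ih G' hm' A {x, y} hside1
      obtain ⟨d₁, e₁, d₂, e₂, X₁, X₂, hD1, hE1, hD2, hE2, hX⟩ := ih G' hm' {x, y} B hside2
      obtain ⟨s₁, t₁, P₁, hP₁path, hs₁A, ht₁S, hP₁A, hP₁S, hP₁sub⟩ :=
        extractPath U₁ A {x, y} hA1 hC1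
      obtain ⟨s₂, t₂, P₂, hP₂path, hs₂A, ht₂S, hP₂A, hP₂S, hP₂sub⟩ :=
        extractPath U₂ A {x, y} hA2 hC2
      obtain ⟨u₁, v₁, Q₁, hQ₁path, hu₁S, hv₁B, hQ₁S, hQ₁B, hQ₁sub⟩ :=
        extractPath X₁ {x, y} B hD1 hE1
      obtain ⟨u₂, v₂, Q₂, hQ₂path, hu₂S, hv₂B, hQ₂S, hQ₂B, hQ₂sub⟩ :=
        extractPath X₂ {x, y} B hD2 hE2
      have hPdisj : ∀ z ∈ P₁.support, z ∉ P₂.support :=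
        fun z h h' => hU z (hP₁sub z h) (hP₂sub z h')
      have hQdisj : ∀ z ∈ Q₁.support, z ∉ Q₂.support :=
        fun z h h' => hX z (hQ₁sub z h) (hQ₂sub z h')
      have ht12 : t₁ ≠ t₂ := fun heq => hPdisj t₁ P₁.end_mem_support
        (heq ▸ P₂.end_mem_support)
      have hu12 : u₁ ≠ u₂ := fun heq => hQdisj u₁ Q₁.start_mem_support
        (heq ▸ Q₂.start_mem_support)
      have hmain : ∀ (c d qv qv' : V) (Qc : G'.Walk c qv) (Qd : G'.Walk d qv'),
          c ≠ d → ({c, d} : Finset V) = {x, y} → t₁ = c → t₂ = d →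
          Qc.IsPath → Qd.IsPath → qv ∈ B → qv' ∈ B →
          (∀ z ∈ Qc.support, z ∈ ({x, y} : Finset V) → z = c) →
          (∀ z ∈ Qd.support, z ∈ ({x, y} : Finset V) → z = d) →
          (∀ z ∈ Qc.support, z ∉ Qd.support) →
          ∃ (a b a' b' : V) (W : G.Walk a b) (W' : G.Walk a' b'),
            a ∈ A ∧ b ∈ B ∧ a' ∈ A ∧ b' ∈ B ∧ ∀ z ∈ W.support, z ∉ W'.support := by
        intro c d qv qv' Qc Qd hcd hset h1 h2 hQcp hQdp hqvB hqv'B hQcS hQdS hQcd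
        have hsepcd : Sep G A B {c, d} := by rw [hset]; exact hsepS
        refine glue2 hle' hcd hsepcd (P₁.copy rfl h1) (P₂.copy rfl h2) Qc Qd
          ((Walk.isPath_copy _ _ _).mpr hP₁path) ((Walk.isPath_copy _ _ _).mpr hP₂path)
          hQcp hQdp hs₁A hs₂A hqvB hqv'B ?_ ?_ ?_ ?_ ?_ hQcd
        · intro z hz hzS
          rw [Walk.support_copy] at hz
          exact (hP₁S z hz (hset ▸ hzS)).trans h1
        · intro z hz hzS
          rw [Walk.support_copy] at hz
          exact (hP₂S z hz (hset ▸ hzS)).trans h2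
        · intro z hz hzS
          exact hQcS z hz (hset ▸ hzS)
        · intro z hz hzS
          exact hQdS z hz (hset ▸ hzS)
        · intro z hz hz'
          rw [Walk.support_copy] at hz hz'
          exact hPdisj z hz hz'
      rcases (by simpa using ht₁S : t₁ = x ∨ t₁ = y) with ht1 | ht1 <;>
        rcases (by simpa using ht₂S : t₂ = x ∨ t₂ = y) with ht2 | ht2 <;>
          rcases (by simpa using hu₁S : u₁ = x ∨ u₁ = y) with hu1 | hu1 <;>
            rcases (by simpa using hu₂S : u₂ = x ∨ u₂ = y) with hu2 | hu2 <;>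
              first
              | exact absurd (ht1.trans ht2.symm) ht12
              | exact absurd (hu1.trans hu2.symm) hu12
              | skip
      · -- t₁ = x, t₂ = y, u₁ = x, u₂ = y
        refine hmain x y v₁ v₂ (Q₁.copy hu1 rfl) (Q₂.copy hu2 rfl) hne rfl ht1 ht2
          ((Walk.isPath_copy _ _ _).mpr hQ₁path) ((Walk.isPath_copy _ _ _).mpr hQ₂path)
          hv₁B hv₂B ?_ ?_ ?_
        · intro z hz hzS
          rw [Walk.support_copy] at hz
          exact (hQ₁S z hz hzS).trans hu1
        · intro z hz hzS
          rw [Walk.support_copy] at hz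
          exact (hQ₂S z hz hzS).trans hu2
        · intro z hz hz'
          rw [Walk.support_copy] at hz hz'
          exact hQdisj z hz hz'
      · -- t₁ = x, t₂ = y, u₁ = y, u₂ = x
        refine hmain x y v₂ v₁ (Q₂.copy hu2 rfl) (Q₁.copy hu1 rfl) hne rfl ht1 ht2
          ((Walk.isPath_copy _ _ _).mpr hQ₂path) ((Walk.isPath_copy _ _ _).mpr hQ₁path)
          hv₂B hv₁B ?_ ?_ ?_
        · intro z hz hzS
          rw [Walk.support_copy] at hz
          exact (hQ₂S z hz hzS).trans hu2
        · intro z hz hzS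
          rw [Walk.support_copy] at hz
          exact (hQ₁S z hz hzS).trans hu1
        · intro z hz hz'
          rw [Walk.support_copy] at hz hz'
          exact hQdisj z hz' hz
      · -- t₁ = y, t₂ = x, u₁ = x, u₂ = y
        refine hmain y x v₂ v₁ (Q₂.copy hu2 rfl) (Q₁.copy hu1 rfl) hne.symm
          (Finset.pair_comm y x) ht1 ht2
          ((Walk.isPath_copy _ _ _).mpr hQ₂path) ((Walk.isPath_copy _ _ _).mpr hQ₁path)
          hv₂B hv₁B ?_ ?_ ?_
        · intro z hz hzS
          rw [Walk.support_copy] at hz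
          exact (hQ₂S z hz hzS).trans hu2
        · intro z hz hzS
          rw [Walk.support_copy] at hz
          exact (hQ₁S z hz hzS).trans hu1
        · intro z hz hz'
          rw [Walk.support_copy] at hz hz'
          exact hQdisj z hz' hz
      · -- t₁ = y, t₂ = x, u₁ = y, u₂ = x
        refine hmain y x v₁ v₂ (Q₁.copy hu1 rfl) (Q₂.copy hu2 rfl) hne.symm
          (Finset.pair_comm y x) ht1 ht2
          ((Walk.isPath_copy _ _ _).mpr hQ₁path) ((Walk.isPath_copy _ _ _).mpr hQ₂path)
          hv₁B hv₂B ?_ ?_ ?_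
        · intro z hz hzS
          rw [Walk.support_copy] at hz
          exact (hQ₁S z hz hzS).trans hu1
        · intro z hz hzS
          rw [Walk.support_copy] at hz
          exact (hQ₂S z hz hzS).trans hu2
        · intro z hz hz'
          rw [Walk.support_copy] at hz hz'
          exact hQdisj z hz hz'

lemma length_rotate' {u v : V} (c : G.Walk v v) (h : u ∈ c.support) :
    (c.rotate u h).length = c.length := by
  have hd := c.rotate_darts u h
  have := hd.perm.length_eq
  rwa [Walk.length_darts, Walk.length_darts] at this

lemma mem_tail_support_of_closed {u : V} (C : G.Walk u u) (hn : ¬ C.Nil) :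
    u ∈ C.support.tail := by
  cases C with
  | nil => exact absurd Walk.nil_nil hn
  | cons h p => simpa using p.end_mem_support

lemma mem_support_of_rotate {u s : V} (C : G.Walk u u) (hn : ¬ C.Nil) (hs : s ∈ C.support) :
    ∀ z, (z ∈ (C.rotate s hs).support ↔ z ∈ C.support) := by
  intro z
  have hperm := (C.support_rotate s hs).perm
  have hn' : ¬ (C.rotate s hs).Nil := by
    intro h
    have := length_rotate' C hs
    rw [Walk.nil_iff_length_eq.mp h] at this
    exact hn (Walk.nil_iff_length_eq.mpr this.symm)
  constructor
  · intro hz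
    rcases List.mem_cons.mp (Walk.support_eq_cons _ ▸ hz) with rfl | hz'
    · exact hs
    · have := hperm.mem_iff.mp hz'
      exact List.mem_of_mem_tail this
  · intro hz
    have hz' : z ∈ C.support.tail ∨ z = u := by
      rcases List.mem_cons.mp (Walk.support_eq_cons _ ▸ hz) with rfl | hz'
      · exact Or.inr rfl
      · exact Or.inl hz'
    have hzt : z ∈ C.support.tail := by
      rcases hz' with h | rfl
      · exact h
      · exact mem_tail_support_of_closed C hn
    exact List.mem_of_mem_tail (hperm.mem_iff.mpr hzt)

lemma start_not_mem_support_tail {a b : V} (P : G.Walk a b) (hP : P.IsPath) :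
    a ∉ P.support.tail := by
  have := hP.support_nodup
  rw [Walk.support_eq_cons] at this
  exact (List.nodup_cons.mp this).1

/-- split a cycle at two distinct vertices into two arcs. -/
lemma arcs {u : V} (C : G.Walk u u) (hC : C.IsCycle) {x s : V}
    (hx : x ∈ C.support) (hs : s ∈ C.support) (hxs : x ≠ s) :
    ∃ (p : G.Walk s x) (q : G.Walk x s), p.IsPath ∧ q.IsPath ∧
      (∀ z ∈ p.support, z ∈ C.support) ∧ (∀ z ∈ q.support, z ∈ C.support) ∧
      p.length + q.length = C.length := by
  have hn : ¬ C.Nil := by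
    intro h
    have := hC.three_le_length
    rw [Walk.nil_iff_length_eq.mp h] at this
    omega
  set C' := C.rotate s hs with hC'def
  have hC' : C'.IsCycle := hC.rotate hs
  have hxmem : x ∈ C'.support := (mem_support_of_rotate C hn hs x).mpr hx
  set p := C'.takeUntil x hxmem with hpdef
  set q := C'.dropUntil x hxmem with hqdef
  have hspec : p.append q = C' := C'.take_spec hxmem
  have hsupp : C'.support = p.support ++ q.support.tail := by
    rw [← Walk.support_append, hspec]
  have hlen : p.length + q.length = C.length := by
    have := congrArg Walk.length hspec
    rw [Walk.length_append] at this
    rw [this]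
    exact length_rotate' C hs
  have htail : C'.support.tail = p.support.tail ++ q.support.tail := by
    have : C'.support = s :: (p.support.tail ++ q.support.tail) := by
      rw [hsupp, Walk.support_eq_cons p]
      simp only [List.cons_append, List.tail_cons]
    rw [this, List.tail_cons]
  have hnd : (p.support.tail ++ q.support.tail).Nodup := htail ▸ hC'.support_nodup
  have hsq : s ∈ q.support.tail := by
    have hsmem : s ∈ q.support := q.end_mem_support
    rcases List.mem_cons.mp (Walk.support_eq_cons q ▸ hsmem) with h | h
    · exact absurd h.symm hxs
    · exact h
  have hxp : x ∈ p.support.tail := by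
    have hxmem' : x ∈ p.support := p.end_mem_support
    rcases List.mem_cons.mp (Walk.support_eq_cons p ▸ hxmem') with h | h
    · exact absurd h hxs
    · exact h
  have hdisj := List.disjoint_of_nodup_append hnd
  have hpnodup : p.support.Nodup := by
    rw [Walk.support_eq_cons p]
    exact List.nodup_cons.mpr ⟨fun hmem => hdisj hmem hsq, (List.nodup_append.mp hnd).1⟩
  have hqnodup : q.support.Nodup := by
    rw [Walk.support_eq_cons q]
    exact List.nodup_cons.mpr ⟨fun hmem => hdisj hxp hmem, (List.nodup_append.mp hnd).2.1⟩
  refine ⟨p, q, Walk.IsPath.mk' hpnodup, Walk.IsPath.mk' hqnodup, ?_, ?_, hlen⟩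
  · intro z hz
    exact (mem_support_of_rotate C hn hs z).mp (C'.support_takeUntil_subset hxmem hz)
  · intro z hz
    exact (mem_support_of_rotate C hn hs z).mp (C'.support_dropUntil_subset hxmem hz)

/-- one of the two arcs has at least half the length of the cycle. -/
lemma halfArc {u : V} (C : G.Walk u u) (hC : C.IsCycle) {x s : V}
    (hx : x ∈ C.support) (hs : s ∈ C.support) (hxs : x ≠ s) :
    ∃ (p : G.Walk s x), p.IsPath ∧ (∀ z ∈ p.support, z ∈ C.support) ∧
      C.length ≤ 2 * p.length := by
  obtain ⟨p, q, hp, hq, hpsub, hqsub, hlen⟩ := arcs C hC hx hs hxs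
  by_cases hcase : C.length ≤ 2 * p.length
  · exact ⟨p, hp, hpsub, hcase⟩
  · refine ⟨q.reverse, hq.reverse, ?_, ?_⟩
    · intro z hz
      rw [Walk.support_reverse] at hz
      exact hqsub z (List.mem_reverse.mp hz)
    · rw [Walk.length_reverse]
      omega

lemma pos_length_of_ne {a b : V} (W : G.Walk a b) (hab : a ≠ b) : 0 < W.length := by
  cases W with
  | nil => exact absurd rfl hab
  | cons h p => simp

lemma edge_end_of_path : ∀ {c v : V} (W : G.Walk c v), W.IsPath → s(v, c) ∈ W.edges →
    W.length = 1 := by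
  intro c v W
  induction W with
  | nil => intro _ he; simp at he
  | cons h W' ih =>
    rename_i a d b
    intro hW he
    rw [Walk.edges_cons] at he
    rcases List.mem_cons.mp he with heq | hmem
    · rw [Sym2.eq_iff] at heq
      rcases heq with ⟨hvc, hcd⟩ | ⟨hvd, -⟩
      · exact absurd hcd h.ne
      · subst hvd
        have hW' : W'.IsPath := ((Walk.cons_isPath_iff h W').mp hW).1
        rw [Walk.isPath_iff_eq_nil] at hW'
        simp [hW']
    · have hc : a ∈ W'.support := W'.snd_mem_support_of_mem_edges hmem
      exact absurd hc ((Walk.cons_isPath_iff h W').mp hW).2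

lemma isCycle_of_tail_nodup {v : V} (W : G.Walk v v) (h3 : 3 ≤ W.length)
    (hnd : W.support.tail.Nodup) : W.IsCycle := by
  cases W with
  | nil => simp at h3
  | cons hadj W' =>
    rw [Walk.cons_isCycle_iff]
    refine ⟨Walk.IsPath.mk' (by simpa using hnd), ?_⟩
    intro he
    have := edge_end_of_path W' (Walk.IsPath.mk' (by simpa using hnd)) he
    simp only [Walk.length_cons] at h3
    omega

lemma longerCycle {u w x s y t : V} {C : G.Walk u u} {D : G.Walk w w}
    (hC : C.IsCycle) (hD : D.IsCycle)
    (hxC : x ∈ C.support) (hsC : s ∈ C.support) (hxs : x ≠ s)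
    (hyD : y ∈ D.support) (htD : t ∈ D.support) (hyt : y ≠ t)
    (P : G.Walk x y) (Q : G.Walk s t) (hP : P.IsPath) (hQ : Q.IsPath)
    (hPC : ∀ z ∈ P.support, z ∈ C.support → z = x)
    (hPD : ∀ z ∈ P.support, z ∈ D.support → z = y)
    (hQC : ∀ z ∈ Q.support, z ∈ C.support → z = s)
    (hQD : ∀ z ∈ Q.support, z ∈ D.support → z = t)
    (hPQ : ∀ z ∈ P.support, z ∉ Q.support)
    (hCD : ∀ z, z ∈ C.support → z ∈ D.support → z = x ∧ z = y)
    (hnn : 0 < P.length + Q.length)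
    (hlen : D.length = C.length) :
    ∃ Z : G.Walk s s, Z.IsCycle ∧ C.length < Z.length := by
  obtain ⟨pC, hpCpath, hpCsub, hpClen⟩ := halfArc C hC hxC hsC hxs
  obtain ⟨pD, hpDpath, hpDsub, hpDlen⟩ := halfArc D hD htD hyD hyt.symm
  set Z := pC.append (P.append (pD.append Q.reverse)) with hZ
  have hZlen : Z.length = pC.length + (P.length + (pD.length + Q.length)) := by
    simp [hZ, Walk.length_append, Walk.length_reverse]
  have hClen3 := hC.three_le_length
  have hlt : C.length < Z.length := by omega
  refine ⟨Z, ?_, hlt⟩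
  apply isCycle_of_tail_nodup _ (by omega)
  have htails : Z.support.tail
      = pC.support.tail ++ (P.support.tail ++ (pD.support.tail ++ Q.reverse.support.tail)) := by
    simp [hZ, Walk.tail_support_append]
  rw [htails]
  have hTC : ∀ z ∈ pC.support.tail, z ∈ C.support :=
    fun z hz => hpCsub z (List.mem_of_mem_tail hz)
  have hTP : ∀ z ∈ P.support.tail, z ∈ P.support := fun z hz => List.mem_of_mem_tail hz
  have hTD : ∀ z ∈ pD.support.tail, z ∈ D.support :=
    fun z hz => hpDsub z (List.mem_of_mem_tail hz)
  have hTQ : ∀ z ∈ Q.reverse.support.tail, z ∈ Q.support := by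
    intro z hz
    have := List.mem_of_mem_tail hz
    rw [Walk.support_reverse] at this
    exact List.mem_reverse.mp this
  have hxTP : x ∉ P.support.tail := start_not_mem_support_tail P hP
  have hyTD : y ∉ pD.support.tail := start_not_mem_support_tail pD hpDpath
  have htTQ : t ∉ Q.reverse.support.tail := start_not_mem_support_tail Q.reverse hQ.reverse
  have hsTC : s ∉ pC.support.tail := start_not_mem_support_tail pC hpCpath
  have d1 : List.Disjoint pC.support.tail P.support.tail := by
    intro z h1 h2
    exact hxTP ((hPC z (hTP z h2) (hTC z h1)) ▸ h2)
  have d2 : List.Disjoint pC.support.tail pD.support.tail := by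
    intro z h1 h2
    exact hyTD ((hCD z (hTC z h1) (hTD z h2)).2 ▸ h2)
  have d3 : List.Disjoint pC.support.tail Q.reverse.support.tail := by
    intro z h1 h2
    exact hsTC ((hQC z (hTQ z h2) (hTC z h1)) ▸ h1)
  have d4 : List.Disjoint P.support.tail pD.support.tail := by
    intro z h1 h2
    exact hyTD ((hPD z (hTP z h1) (hTD z h2)) ▸ h2)
  have d5 : List.Disjoint P.support.tail Q.reverse.support.tail := by
    intro z h1 h2
    exact hPQ z (hTP z h1) (hTQ z h2)
  have d6 : List.Disjoint pD.support.tail Q.reverse.support.tail := by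
    intro z h1 h2
    exact htTQ ((hQD z (hTQ z h2) (hTD z h1)) ▸ h2)
  have n1 : pC.support.tail.Nodup := (List.tail_sublist _).nodup hpCpath.support_nodup
  have n2 : P.support.tail.Nodup := (List.tail_sublist _).nodup hP.support_nodup
  have n3 : pD.support.tail.Nodup := (List.tail_sublist _).nodup hpDpath.support_nodup
  have n4 : Q.reverse.support.tail.Nodup :=
    (List.tail_sublist _).nodup hQ.reverse.support_nodup
  rw [List.nodup_append, List.nodup_append, List.nodup_append]
  refine ⟨n1, ⟨n2, ⟨n3, n4, fun a ha b hb hab => by subst hab; exact d6 ha hb⟩, ?_⟩, ?_⟩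
  · intro z h1 z' h2 hzz; subst hzz
    rcases List.mem_append.mp h2 with h | h
    · exact d4 h1 h
    · exact d5 h1 h
  · intro z h1 z' h2 hzz; subst hzz
    rcases List.mem_append.mp h2 with h | h
    · exact d1 h1 h
    rcases List.mem_append.mp h with h' | h'
    · exact d2 h1 h'
    · exact d3 h1 h'

lemma cycle_card {u : V} (C : G.Walk u u) (hC : C.IsCycle) :
    3 ≤ C.support.toFinset.card := by
  have h1 : C.support.tail.toFinset.card = C.support.tail.length :=
    List.toFinset_card_of_nodup hC.support_nodup
  have h2 : C.support.tail.length = C.length := by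
    rw [List.length_tail, Walk.length_support]
    omega
  have h3 : C.support.tail.toFinset ⊆ C.support.toFinset := by
    intro z hz
    rw [List.mem_toFinset] at hz ⊢
    exact List.mem_of_mem_tail hz
  have h4 := Finset.card_le_card h3
  have h5 := hC.three_le_length
  omega

lemma exists_mem_ne {u : V} (C : G.Walk u u) (hC : C.IsCycle) (v : V) :
    ∃ a ∈ C.support, a ≠ v := by
  by_contra h
  push_neg at h
  have hsub : C.support.toFinset ⊆ {v} := by
    intro z hz
    rw [List.mem_toFinset] at hz
    simp [h z hz]
  have := Finset.card_le_card hsub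
  have := cycle_card C hC
  simp at *
  omega

lemma walk_avoiding (hG : ∀ v : V, ((⊤ : G.Subgraph).deleteVerts {v}).coe.Connected)
    (v a b : V) (ha : a ≠ v) (hb : b ≠ v) :
    ∃ W : G.Walk a b, ∀ z ∈ W.support, z ≠ v := by
  have ha' : a ∈ ((⊤ : G.Subgraph).deleteVerts {v}).verts := by simp [ha]
  have hb' : b ∈ ((⊤ : G.Subgraph).deleteVerts {v}).verts := by simp [hb]
  obtain ⟨W0⟩ := (hG v) ⟨a, ha'⟩ ⟨b, hb'⟩
  refine ⟨W0.map (SimpleGraph.Subgraph.hom _), ?_⟩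
  intro z hz
  replace hz : z ∈ (W0.map ((⊤ : G.Subgraph).deleteVerts {v}).hom).support := hz
  rw [Walk.support_map] at hz
  obtain ⟨⟨z', hz'⟩, -, rfl⟩ := List.mem_map.mp hz
  intro hzv
  simp only [Subgraph.deleteVerts_verts, Subgraph.verts_top, Set.mem_diff,
    Set.mem_singleton_iff] at hz'
  exact hz'.2 (by simpa using hzv)

end Aux


/-- In a 2-connected graph, any two longest cycles share at least two vertices. -/
theorem stmt_0 {V : Type} [Fintype V] [DecidableEq V] (G : SimpleGraph V)
    (hG : TwoConnected G) {u w : V} (C : G.Walk u u) (D : G.Walk w w)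
    (hC : IsLongestCycle G C) (hD : IsLongestCycle G D) :
    2 ≤ (C.support.toFinset ∩ D.support.toFinset).card := by
  classical
  have : Nonempty V := ⟨u⟩
  by_contra hcon
  push_neg at hcon
  obtain ⟨hC1, hCmax⟩ := hC
  obtain ⟨hD1, hDmax⟩ := hD
  have hlenCD : D.length = C.length := le_antisymm (hCmax w D hD1) (hDmax u C hC1)
  set Cs := C.support.toFinset with hCsdef
  set Ds := D.support.toFinset with hDsdef
  have hcard : (Cs ∩ Ds).card ≤ 1 := by omega
  have havoid : ∀ (v a b : V), a ≠ v → b ≠ v → ∃ W : G.Walk a b, ∀ z ∈ W.support, z ≠ v :=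
    fun v a b ha hb => Aux.walk_avoiding hG.2 v a b ha hb
  rcases Nat.le_one_iff_eq_zero_or_eq_one.mp hcard with h0 | h1
  · -- the two cycles are disjoint: apply Menger
    have hdisj0 : ∀ z, z ∈ C.support → z ∈ D.support → False := by
      intro z hzC hzD
      have hzmem : z ∈ Cs ∩ Ds :=
        Finset.mem_inter.mpr ⟨List.mem_toFinset.mpr hzC, List.mem_toFinset.mpr hzD⟩
      rw [Finset.card_eq_zero.mp h0] at hzmem
      simp at hzmem
    have hsep : ∀ S : Finset V, Aux.Sep G Cs Ds S → 2 ≤ S.card := by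
      intro S hS
      by_contra hS2
      push_neg at hS2
      obtain ⟨v, hv⟩ := Finset.card_le_one_iff_subset_singleton.mp (by omega : S.card ≤ 1)
      obtain ⟨a, haC, hav⟩ := Aux.exists_mem_ne C hC1 v
      obtain ⟨b, hbD, hbv⟩ := Aux.exists_mem_ne D hD1 v
      obtain ⟨W, hW⟩ := havoid v a b hav hbv
      obtain ⟨z, hzS, hzsupp⟩ := hS (List.mem_toFinset.mpr haC) (List.mem_toFinset.mpr hbD) W
      exact hW z hzsupp (Finset.mem_singleton.mp (hv hzS))
    obtain ⟨x0, y0, s0, t0, WP, WQ, hx0, hy0, hs0, ht0, hWdisj⟩ :=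
      Aux.menger2 (Aux.m G) G le_rfl Cs Ds hsep
    obtain ⟨x, y, P, hPpath, hxCs, hyDs, hPA, hPB, hPsub⟩ := Aux.extractPath WP Cs Ds hx0 hy0
    obtain ⟨s, t, Q, hQpath, hsCs, htDs, hQA, hQB, hQsub⟩ := Aux.extractPath WQ Cs Ds hs0 ht0
    have hPQ : ∀ z ∈ P.support, z ∉ Q.support := fun z h h' => hWdisj z (hPsub z h) (hQsub z h')
    have hxs : x ≠ s := fun h => hPQ x P.start_mem_support (h ▸ Q.start_mem_support)
    have hyt : y ≠ t := fun h => hPQ y P.end_mem_support (h ▸ Q.end_mem_support)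
    have hxy : x ≠ y := fun h =>
      hdisj0 x (List.mem_toFinset.mp hxCs) (h ▸ List.mem_toFinset.mp hyDs)
    obtain ⟨Z, hZcyc, hZlen⟩ := Aux.longerCycle hC1 hD1
      (List.mem_toFinset.mp hxCs) (List.mem_toFinset.mp hsCs) hxs
      (List.mem_toFinset.mp hyDs) (List.mem_toFinset.mp htDs) hyt
      P Q hPpath hQpath
      (fun z hz hzc => hPA z hz (List.mem_toFinset.mpr hzc))
      (fun z hz hzd => hPB z hz (List.mem_toFinset.mpr hzd))
      (fun z hz hzc => hQA z hz (List.mem_toFinset.mpr hzc))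
      (fun z hz hzd => hQB z hz (List.mem_toFinset.mpr hzd))
      hPQ
      (fun z hzc hzd => (hdisj0 z hzc hzd).elim)
      (by have := Aux.pos_length_of_ne P hxy; omega)
      hlenCD
    have := hCmax s Z hZcyc
    omega
  · -- exactly one common vertex
    obtain ⟨v, hv⟩ := Finset.card_eq_one.mp h1
    have hvmem : v ∈ Cs ∩ Ds := hv ▸ Finset.mem_singleton_self v
    have hvC : v ∈ C.support := List.mem_toFinset.mp (Finset.mem_inter.mp hvmem).1
    have hvD : v ∈ D.support := List.mem_toFinset.mp (Finset.mem_inter.mp hvmem).2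
    have huniq : ∀ z, z ∈ C.support → z ∈ D.support → z = v := by
      intro z h1' h2'
      have hzmem : z ∈ Cs ∩ Ds :=
        Finset.mem_inter.mpr ⟨List.mem_toFinset.mpr h1', List.mem_toFinset.mpr h2'⟩
      rw [hv] at hzmem
      exact Finset.mem_singleton.mp hzmem
    obtain ⟨a, haC, hav⟩ := Aux.exists_mem_ne C hC1 v
    obtain ⟨b, hbD, hbv⟩ := Aux.exists_mem_ne D hD1 v
    obtain ⟨W, hWav⟩ := havoid v a b hav hbv
    obtain ⟨s, t, Q, hQpath, hsCs, htDs, hQA, hQB, hQsub⟩ :=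
      Aux.extractPath W Cs Ds (List.mem_toFinset.mpr haC) (List.mem_toFinset.mpr hbD)
    have hsv : s ≠ v := hWav s (hQsub s Q.start_mem_support)
    have htv : t ≠ v := hWav t (hQsub t Q.end_mem_support)
    have hst : s ≠ t := by
      intro h
      exact hsv (huniq s (List.mem_toFinset.mp hsCs) (h ▸ List.mem_toFinset.mp htDs))
    obtain ⟨Z, hZcyc, hZlen⟩ := Aux.longerCycle hC1 hD1
      hvC (List.mem_toFinset.mp hsCs) (Ne.symm hsv)
      hvD (List.mem_toFinset.mp htDs) (Ne.symm htv)
      (Walk.nil : G.Walk v v) Q Walk.IsPath.nil hQpath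
      (fun z hz _ => by simpa using hz)
      (fun z hz _ => by simpa using hz)
      (fun z hz hzc => hQA z hz (List.mem_toFinset.mpr hzc))
      (fun z hz hzd => hQB z hz (List.mem_toFinset.mpr hzd))
      (by
        intro z hz hzQ
        have : z = v := by simpa using hz
        exact hWav z (hQsub z hzQ) this)
      (fun z hzc hzd => ⟨huniq z hzc hzd, huniq z hzc hzd⟩)
      (by have := Aux.pos_length_of_ne Q hst; simpa using this)
      hlenCD
    have := hCmax s Z hZcyc
    omega
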